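/- For any formulas φ^k defined by φ^0 = φ and φ^{k+1} = φ → φ^k, and any Epstein relation R with (φ, φ^n) ∉ R for some n ≥ 1: for every k ≥ 1 with k ≠ n, R ⊨ σ(p ↪ p^k) for all substitutions σ with σ(p)=φ, where R = (FOR × FOR) \ {(p, p^n)}. Consequently, for distinct nonempty T, V ⊆ ω\{0}, the logics FK_T and FK_V are distinct, where K_T = {p ↪ p^k : k ∈ T}; hence there are 2^ℵ₀ distinct extensions of F of this form. -/
import Mathlib


/-- Epstein formulas: letters, ¬, ∨, ∧, →, ↔, △ (tri), ↪ (hook). -/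
inductive EFor : Type
  | var : ℕ → EFor
  | neg : EFor → EFor
  | or : EFor → EFor → EFor
  | and : EFor → EFor → EFor
  | imp : EFor → EFor → EFor
  | iff : EFor → EFor → EFor
  | tri : EFor → EFor → EFor
  | hook : EFor → EFor → EFor
  deriving DecidableEq

/-- An Epstein model: a valuation of letters and a binary relation on formulas. -/
structure EModel : Type where
  v : ℕ → Prop
  R : Set (EFor × EFor)

/-- Epstein satisfaction. -/
def sat (M : EModel) : EFor → Prop
  | .var n => M.v n
  | .neg φ => ¬ sat M φ
  | .or φ ψ => sat M φ ∨ sat M ψ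
  | .and φ ψ => sat M φ ∧ sat M ψ
  | .imp φ ψ => sat M φ → sat M ψ
  | .iff φ ψ => (sat M φ ↔ sat M ψ)
  | .tri φ ψ => (sat M φ ∧ sat M ψ) ∧ (φ, ψ) ∈ M.R
  | .hook φ ψ => (sat M φ → sat M ψ) ∧ (φ, ψ) ∈ M.R

/-- The Omega set of a model. -/
def Omega (M : EModel) : Set (EFor × EFor) :=
  {p | ¬ sat M (.imp p.1 p.2)}

/-- The S-set of a model. -/
def Sset (M : EModel) : Set EModel :=
  {N | N.v = M.v ∧ M.R \ Omega M ⊆ N.R ∧ N.R ⊆ M.R ∪ Omega M}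

/-- The theory of a model. -/
def Th (M : EModel) : Set EFor := {φ | sat M φ}

/-- Substitution: extend a map on letters homomorphically. -/
def esubst (σ : ℕ → EFor) : EFor → EFor
  | .var n => σ n
  | .neg φ => .neg (esubst σ φ)
  | .or φ ψ => .or (esubst σ φ) (esubst σ ψ)
  | .and φ ψ => .and (esubst σ φ) (esubst σ ψ)
  | .imp φ ψ => .imp (esubst σ φ) (esubst σ ψ)
  | .iff φ ψ => .iff (esubst σ φ) (esubst σ ψ)
  | .tri φ ψ => .tri (esubst σ φ) (esubst σ ψ)
  | .hook φ ψ => .hook (esubst σ φ) (esubst σ ψ)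

/-- A boolean homomorphism: any assignment respecting the boolean connectives
(no constraint on △, ↪, which are treated as atoms). -/
def BoolHom (w : EFor → Prop) : Prop :=
  (∀ φ, w (.neg φ) ↔ ¬ w φ) ∧
  (∀ φ ψ, w (.or φ ψ) ↔ (w φ ∨ w ψ)) ∧
  (∀ φ ψ, w (.and φ ψ) ↔ (w φ ∧ w ψ)) ∧
  (∀ φ ψ, w (.imp φ ψ) ↔ (w φ → w ψ)) ∧
  (∀ φ ψ, w (.iff φ ψ) ↔ (w φ ↔ w ψ))

/-- Classical tautologies in the language of Epstein logic. -/
def Taut (φ : EFor) : Prop := ∀ w, BoolHom w → w φ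

/-- The logic FΛ: least set containing CPL, the two Epstein axioms and Λ,
closed under uniform substitution and modus ponens. -/
inductive FLam (Λ : Set EFor) : EFor → Prop
  | taut {φ} : Taut φ → FLam Λ φ
  | ax1 : FLam Λ (.imp (.hook (.var 0) (.var 1)) (.imp (.var 0) (.var 1)))
  | ax2 : FLam Λ (.iff (.tri (.var 0) (.var 1))
      (.and (.hook (.var 0) (.var 1)) (.and (.var 0) (.var 1))))
  | extra {φ} : φ ∈ Λ → FLam Λ φ
  | subst {φ} (σ : ℕ → EFor) : FLam Λ φ → FLam Λ (esubst σ φ)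
  | mp {φ ψ} : FLam Λ (.imp φ ψ) → FLam Λ φ → FLam Λ ψ

/-- The base logic F. -/
def Fmem : EFor → Prop := FLam ∅

/-- Hilbert derivability from premises Γ over a logic L. -/
inductive Deriv (L : EFor → Prop) (Γ : Set EFor) : EFor → Prop
  | thm {φ} : L φ → Deriv L Γ φ
  | prem {φ} : φ ∈ Γ → Deriv L Γ φ
  | mp {φ ψ} : Deriv L Γ (.imp φ ψ) → Deriv L Γ φ → Deriv L Γ ψ

/-- Validity on a relation: true in all models built over it. -/
def relSat (R : Set (EFor × EFor)) (φ : EFor) : Prop :=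
  ∀ v : ℕ → Prop, sat ⟨v, R⟩ φ

def etop : EFor := .or (.var 0) (.neg (.var 0))
def ebot : EFor := .neg etop

/-- p^0 := p, p^{k+1} := p → p^k. -/
def pTow : ℕ → EFor
  | 0 => .var 0
  | k + 1 => .imp (.var 0) (pTow k)

/-- The tower φ^k: φ^0 := φ, φ^{k+1} := φ → φ^k. -/
def phiTow (φ : EFor) : ℕ → EFor
  | 0 => φ
  | k + 1 => .imp φ (phiTow φ k)

/-- K_T = {p ↪ p^k : k ∈ T}. -/
def Kset (T : Set ℕ) : Set EFor := {χ | ∃ k ∈ T, χ = .hook (.var 0) (pTow k)}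

def FLamSet (Λ : Set EFor) : Set EFor := {φ | FLam Λ φ}

/-! ### Auxiliary lemmas -/

lemma satBoolHom (M : EModel) : BoolHom (sat M) := by
  refine ⟨?_, ?_, ?_, ?_, ?_⟩ <;> intros <;> simp [sat]

lemma boolHom_comp {w : EFor → Prop} (hw : BoolHom w) (σ : ℕ → EFor) :
    BoolHom (fun φ => w (esubst σ φ)) := by
  obtain ⟨h1, h2, h3, h4, h5⟩ := hw
  refine ⟨?_, ?_, ?_, ?_, ?_⟩ <;> intros <;> simp [esubst, h1, h2, h3, h4, h5]

lemma taut_subst {φ : EFor} (h : Taut φ) (σ : ℕ → EFor) : Taut (esubst σ φ) :=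
  fun w hw => h (fun ψ => w (esubst σ ψ)) (boolHom_comp hw σ)

lemma esubst_comp (σ τ : ℕ → EFor) (φ : EFor) :
    esubst σ (esubst τ φ) = esubst (fun n => esubst σ (τ n)) φ := by
  induction φ <;> simp [esubst, *]

lemma esubst_var (φ : EFor) : esubst EFor.var φ = φ := by
  induction φ <;> simp [esubst, *]

lemma esubst_pTow (σ : ℕ → EFor) (k : ℕ) : esubst σ (pTow k) = phiTow (σ 0) k := by
  induction k <;> simp [pTow, phiTow, esubst, *]

lemma phiTow_var (k : ℕ) : phiTow (.var 0) k = pTow k := by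
  induction k <;> simp [pTow, phiTow, *]

lemma phiTow_sat (M : EModel) (φ : EFor) (h : sat M φ) (k : ℕ) : sat M (phiTow φ k) := by
  induction k with
  | zero => exact h
  | succ k ih => exact fun _ => ih

lemma pTow_inj : ∀ {m n : ℕ}, pTow m = pTow n → m = n := by
  intro m
  induction m with
  | zero => intro n h; cases n with
    | zero => rfl
    | succ n => simp [pTow] at h
  | succ m ih => intro n h; cases n with
    | zero => simp [pTow] at h
    | succ n => simp only [pTow, EFor.imp.injEq] at h; exact congrArg Nat.succ (ih h.2)

/-- The key model-theoretic lemma. -/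
lemma key (n k : ℕ) (hkn : k ≠ n) (φ : EFor) :
    relSat (Set.univ \ {(EFor.var 0, pTow n)}) (.hook φ (phiTow φ k)) := by
  intro v
  refine ⟨fun h => phiTow_sat _ _ h k, ?_⟩
  simp only [Set.mem_diff, Set.mem_univ, Set.mem_singleton_iff, true_and, Prod.mk.injEq, not_and]
  intro hφ hTow
  subst hφ
  rw [phiTow_var] at hTow
  exact hkn (pTow_inj hTow)

/-- Soundness of FLam (Kset V) on R_n when n ∉ V, under all substitutions. -/
lemma soundness {V : Set ℕ} {n : ℕ} (hn : n ∉ V) {φ : EFor} (h : FLam (Kset V) φ) :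
    ∀ σ : ℕ → EFor, relSat (Set.univ \ {(EFor.var 0, pTow n)}) (esubst σ φ) := by
  induction h with
  | taut ht => exact fun σ v => taut_subst ht σ (sat _) (satBoolHom _)
  | ax1 => intro σ v; simp only [esubst, sat]; tauto
  | ax2 => intro σ v; simp only [esubst, sat]; tauto
  | extra hφ =>
    obtain ⟨k, hk, rfl⟩ := hφ
    intro σ
    simp only [esubst, esubst_pTow]
    exact key n k (fun h => hn (h ▸ hk)) (σ 0)
  | subst τ _ ih => intro σ; rw [esubst_comp]; exact ih _
  | mp _ _ ih1 ih2 => intro σ v; exact (ih1 σ v) (ih2 σ v)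

/-- Helper for distinctness. -/
lemma distinct_helper {T V : Set ℕ} {n : ℕ} (hT : n ∈ T) (hV : n ∉ V) :
    FLamSet (Kset T) ≠ FLamSet (Kset V) := by
  intro h
  have h1 : (EFor.hook (.var 0) (pTow n)) ∈ FLamSet (Kset T) := FLam.extra ⟨n, hT, rfl⟩
  rw [h] at h1
  have h3 := soundness hV h1 EFor.var (fun _ => True)
  rw [esubst_var] at h3
  exact h3.2.2 rfl

/-- Encoding of formulas into ℕ. -/
def eToNat : EFor → ℕ
  | .var n => Nat.pair 0 n
  | .neg φ => Nat.pair 1 (eToNat φ)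
  | .or φ ψ => Nat.pair 2 (Nat.pair (eToNat φ) (eToNat ψ))
  | .and φ ψ => Nat.pair 3 (Nat.pair (eToNat φ) (eToNat ψ))
  | .imp φ ψ => Nat.pair 4 (Nat.pair (eToNat φ) (eToNat ψ))
  | .iff φ ψ => Nat.pair 5 (Nat.pair (eToNat φ) (eToNat ψ))
  | .tri φ ψ => Nat.pair 6 (Nat.pair (eToNat φ) (eToNat ψ))
  | .hook φ ψ => Nat.pair 7 (Nat.pair (eToNat φ) (eToNat ψ))

lemma eToNat_inj : Function.Injective eToNat := by
  intro a
  induction a <;> intro b h <;> cases b <;>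
    simp_all [eToNat, Nat.pair_eq_pair] <;> aesop

instance : Countable EFor := ⟨eToNat, eToNat_inj⟩

instance : Infinite EFor := Infinite.of_injective EFor.var (fun a b h => by injection h)

lemma mk_EFor : Cardinal.mk EFor = Cardinal.aleph0 := Cardinal.mk_eq_aleph0 EFor

/-- the model-theoretic fact about R = FOR² \ {(p, p^n)}, the
distinctness of the logics FK_T, and the count 2^ℵ₀ of such extensions of F. -/
theorem stmt9 :
    (∀ (φ : EFor) (n : ℕ), 1 ≤ n →
      ∀ k, 1 ≤ k → k ≠ n → ∀ σ : ℕ → EFor, σ 0 = φ →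
        relSat (Set.univ \ {(EFor.var 0, pTow n)}) (esubst σ (.hook (.var 0) (pTow k)))) ∧
    (∀ T V : Set ℕ, T.Nonempty → V.Nonempty → 0 ∉ T → 0 ∉ V → T ≠ V →
      FLamSet (Kset T) ≠ FLamSet (Kset V)) ∧
    Cardinal.mk (↥{L : Set EFor | ∃ T : Set ℕ, T.Nonempty ∧ 0 ∉ T ∧ L = FLamSet (Kset T)})
      = 2 ^ Cardinal.aleph0 := by
  have part1 : ∀ (φ : EFor) (n : ℕ), 1 ≤ n →
      ∀ k, 1 ≤ k → k ≠ n → ∀ σ : ℕ → EFor, σ 0 = φ →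
        relSat (Set.univ \ {(EFor.var 0, pTow n)}) (esubst σ (.hook (.var 0) (pTow k))) := by
    intro φ n _ k _ hkn σ _
    simpa only [esubst, esubst_pTow] using key n k hkn (σ 0)
  have part2 : ∀ T V : Set ℕ, T.Nonempty → V.Nonempty → 0 ∉ T → 0 ∉ V → T ≠ V →
      FLamSet (Kset T) ≠ FLamSet (Kset V) := by
    intro T V _ _ _ _ hTV
    obtain ⟨n, hn⟩ : ∃ n, (n ∈ T ∧ n ∉ V) ∨ (n ∈ V ∧ n ∉ T) := by
      by_contra hc
      push_neg at hc
      exact hTV (Set.ext fun n => ⟨(hc n).1, (hc n).2⟩)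
    rcases hn with ⟨h1, h2⟩ | ⟨h1, h2⟩
    · exact distinct_helper h1 h2
    · exact (distinct_helper h1 h2).symm
  refine ⟨part1, part2, ?_⟩
  apply le_antisymm
  · calc Cardinal.mk (↥{L : Set EFor | ∃ T : Set ℕ, T.Nonempty ∧ 0 ∉ T ∧ L = FLamSet (Kset T)})
        ≤ Cardinal.mk (Set EFor) := Cardinal.mk_subtype_le _
      _ = 2 ^ Cardinal.aleph0 := by rw [Cardinal.mk_set, mk_EFor]
  · set g : Set ℕ → Set ℕ := fun S => insert 1 ((· + 2) '' S) with hg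
    have hg_mem : ∀ S n, n + 2 ∈ g S ↔ n ∈ S := by
      intro S n
      simp only [hg, Set.mem_insert_iff, Set.mem_image]
      constructor
      · rintro (h | ⟨m, hm, hmn⟩)
        · omega
        · obtain rfl : m = n := by omega
          exact hm
      · intro h; exact Or.inr ⟨n, h, rfl⟩
    have hg_inj : Function.Injective g := by
      intro S S' h
      ext n
      rw [← hg_mem S n, h, hg_mem]
    have hg_ne : ∀ S, (g S).Nonempty := fun S => ⟨1, Set.mem_insert _ _⟩
    have hg_z : ∀ S, 0 ∉ g S := by
      intro S h
      simp only [hg, Set.mem_insert_iff, Set.mem_image] at h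
      rcases h with h | ⟨m, _, hm⟩ <;> omega
    have : Cardinal.mk (Set ℕ) ≤
        Cardinal.mk (↥{L : Set EFor | ∃ T : Set ℕ, T.Nonempty ∧ 0 ∉ T ∧ L = FLamSet (Kset T)}) := by
      refine ⟨⟨fun S => ⟨FLamSet (Kset (g S)), g S, hg_ne S, hg_z S, rfl⟩, ?_⟩⟩
      intro S S' h
      by_contra hne
      exact part2 (g S) (g S') (hg_ne S) (hg_ne S') (hg_z S) (hg_z S')
        (fun he => hne (hg_inj he)) (congrArg Subtype.val h)
    calc (2 : Cardinal) ^ Cardinal.aleph0 = Cardinal.mk (Set ℕ) := by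
          rw [Cardinal.mk_set, Cardinal.mk_nat]
      _ ≤ _ := this
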